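/- For 2 ≤ r ≤ n-2, the linear map from ℝ^(C(n,2)) to ℝ^(C(n,r)) whose I-th coordinate (for an r-subset I of [n]) is the sum of x_{ij} over all 2-element subsets {i,j} ⊆ I, is injective. Moreover, when r = 2 or r = n-2 this map is bijective. -/
import Mathlib

open Finset

/-- Auxiliary coefficient. -/
def nu (n r t s : ℕ) : ℕ :=
  if s ≤ t ∧ 2 + (t - s) ≤ r then
    (2 - s).choose (t - s) * (n - 4 + s).choose (r - 2 - (t - s))
  else 0


lemma count_eq {n : ℕ} (r t : ℕ) (hn : 4 ≤ n) (K J : Finset (Fin n))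
    (hK : K.card = 2) (hJ : J.card = 2) :
    (Finset.univ.filter (fun I : Finset (Fin n) =>
        I.card = r ∧ J ⊆ I ∧ (I ∩ K).card = t)).card
    = nu n r t (J ∩ K).card := by
  rw [nu]
  set s := (J ∩ K).card with hsdef
  have hs2 : s ≤ 2 := hJ ▸ card_le_card inter_subset_left
  split_ifs with hcond
  · obtain ⟨hst, hrc⟩ := hcond
    have key : (Finset.univ.filter (fun I : Finset (Fin n) =>
        I.card = r ∧ J ⊆ I ∧ (I ∩ K).card = t)).card
        = ((K \ J).powersetCard (t - s) ×ˢ ((J ∪ K)ᶜ).powersetCard (r - 2 - (t - s))).card := by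
      refine Finset.card_bij' (i := fun I _ => ((I ∩ K) \ J, I \ (J ∪ K)))
        (j := fun p _ => J ∪ p.1 ∪ p.2) ?_ ?_ ?_ ?_
      · -- forward membership
        intro I hI
        simp only [mem_filter, mem_univ, true_and] at hI
        obtain ⟨hIr, hJI, hIK⟩ := hI
        have hIKJ : (I ∩ K) ∩ J = J ∩ K := by
          ext x; simp only [mem_inter]
          exact ⟨fun h => ⟨h.2, h.1.2⟩, fun h => ⟨⟨hJI h.1, h.2⟩, h.1⟩⟩
        have h1 : ((I ∩ K) \ J).card + s = t := by
          have := card_sdiff_add_card_inter (I ∩ K) J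
          rw [hIKJ, hIK] at this
          omega
        have hIJK : I ∩ (J ∪ K) = J ∪ (I ∩ K) := by
          ext x; simp only [mem_inter, mem_union]
          constructor
          · rintro ⟨hxI, hx | hx⟩
            · exact Or.inl hx
            · exact Or.inr ⟨hxI, hx⟩
          · rintro (hx | ⟨hxI, hxK⟩)
            · exact ⟨hJI hx, Or.inl hx⟩
            · exact ⟨hxI, Or.inr hxK⟩
        have hJIK : J ∩ (I ∩ K) = J ∩ K := by
          ext x; simp only [mem_inter]
          exact ⟨fun h => ⟨h.1, h.2.2⟩, fun h => ⟨h.1, hJI h.1, h.2⟩⟩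
        have h2 : (J ∪ (I ∩ K)).card + s = 2 + t := by
          have := card_union_add_card_inter J (I ∩ K)
          rw [hJIK, hJ, hIK] at this
          omega
        have h3 : (I \ (J ∪ K)).card + (2 + t - s) = r := by
          have h4 := card_sdiff_add_card_inter I (J ∪ K)
          rw [hIJK, hIr] at h4
          omega
        simp only [mem_product, mem_powersetCard]
        refine ⟨⟨fun x hx => ?_, by omega⟩, fun x hx => ?_, by omega⟩
        · simp only [mem_sdiff, mem_inter] at hx ⊢
          exact ⟨hx.1.2, hx.2⟩
        · simp only [mem_sdiff] at hx
          simp only [mem_compl]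
          exact hx.2
      · -- backward membership
        intro p hp
        simp only [mem_product, mem_powersetCard] at hp
        obtain ⟨⟨ha, hac⟩, hb, hbc⟩ := hp
        have ha' : ∀ x ∈ p.1, x ∈ K ∧ x ∉ J := fun x hx => by
          have := ha hx; simp only [mem_sdiff] at this; exact this
        have hb' : ∀ x ∈ p.2, x ∉ J ∧ x ∉ K := fun x hx => by
          have := hb hx; simp only [mem_compl, mem_union] at this; tauto
        have hdJa : Disjoint J p.1 := by
          rw [disjoint_right]; intro x hx; exact fun hxJ => (ha' x hx).2 hxJ
        have hdJab : Disjoint (J ∪ p.1) p.2 := by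
          rw [disjoint_right]; intro x hx
          simp only [mem_union]
          rintro (h | h)
          · exact (hb' x hx).1 h
          · exact (hb' x hx).2 (ha' x h).1
        have hcard : (J ∪ p.1 ∪ p.2).card = r := by
          rw [card_union_of_disjoint hdJab, card_union_of_disjoint hdJa, hJ, hac, hbc]
          omega
        have hIK : (J ∪ p.1 ∪ p.2) ∩ K = (J ∩ K) ∪ p.1 := by
          ext x
          simp only [mem_inter, mem_union]
          constructor
          · rintro ⟨h1 | h2, hxK⟩
            · rcases h1 with h | h
              · exact Or.inl ⟨h, hxK⟩
              · exact Or.inr h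
            · exact absurd hxK (hb' x h2).2
          · rintro (⟨h1, h2⟩ | h)
            · exact ⟨Or.inl (Or.inl h1), h2⟩
            · exact ⟨Or.inl (Or.inr h), (ha' x h).1⟩
        have hdisj2 : Disjoint (J ∩ K) p.1 := by
          rw [disjoint_right]; intro x hx hxJ
          exact (ha' x hx).2 (mem_inter.mp hxJ).1
        simp only [mem_filter, mem_univ, true_and]
        refine ⟨hcard, subset_union_left.trans subset_union_left, ?_⟩
        rw [hIK, card_union_of_disjoint hdisj2, hac]
        omega
      · -- left inverse
        intro I hI
        simp only [mem_filter, mem_univ, true_and] at hI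
        obtain ⟨_, hJI, _⟩ := hI
        ext x
        simp only [mem_union, mem_sdiff, mem_inter, mem_compl]
        constructor
        · rintro ((h | ⟨⟨h1, _⟩, _⟩) | ⟨h1, _⟩)
          · exact hJI h
          · exact h1
          · exact h1
        · intro hxI
          by_cases hxJ : x ∈ J
          · exact Or.inl (Or.inl hxJ)
          · by_cases hxK : x ∈ K
            · exact Or.inl (Or.inr ⟨⟨hxI, hxK⟩, hxJ⟩)
            · exact Or.inr ⟨hxI, fun h => h.elim hxJ hxK⟩
      · -- right inverse
        intro p hp
        simp only [mem_product, mem_powersetCard] at hp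
        obtain ⟨⟨ha, _⟩, hb, _⟩ := hp
        have ha' : ∀ x ∈ p.1, x ∈ K ∧ x ∉ J := fun x hx => by
          have := ha hx; simp only [mem_sdiff] at this; exact this
        have hb' : ∀ x ∈ p.2, x ∉ J ∧ x ∉ K := fun x hx => by
          have := hb hx; simp only [mem_compl, mem_union] at this; tauto
        have e1 : ((J ∪ p.1 ∪ p.2) ∩ K) \ J = p.1 := by
          ext x
          simp only [mem_sdiff, mem_inter, mem_union]
          constructor
          · rintro ⟨⟨(h | h) | h, hxK⟩, hxJ⟩
            · exact absurd h hxJ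
            · exact h
            · exact absurd hxK (hb' x h).2
          · intro h
            exact ⟨⟨Or.inl (Or.inr h), (ha' x h).1⟩, (ha' x h).2⟩
        have e2 : (J ∪ p.1 ∪ p.2) \ (J ∪ K) = p.2 := by
          ext x
          simp only [mem_sdiff, mem_union]
          constructor
          · rintro ⟨(h | h) | h, hx2⟩
            · exact absurd (Or.inl h) hx2
            · exact absurd (Or.inr (ha' x h).1) hx2
            · exact h
          · intro h
            refine ⟨Or.inr h, ?_⟩
            rintro (hc | hc)
            · exact (hb' x h).1 hc
            · exact (hb' x h).2 hc
        simp only [← union_assoc, e1, e2]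
    rw [key, Finset.card_product, card_powersetCard, card_powersetCard]
    have hKJ : (K \ J).card = 2 - s := by
      have := card_sdiff_add_card_inter K J
      rw [inter_comm K J, hK] at this
      omega
    have hJKc : ((J ∪ K)ᶜ).card = n - 4 + s := by
      rw [card_compl]
      have := card_union_add_card_inter J K
      rw [hJ, hK] at this
      have : (J ∪ K).card = 4 - s := by omega
      rw [this, Fintype.card_fin]
      omega
    rw [hKJ, hJKc]
  · -- empty case
    rw [Finset.card_eq_zero, Finset.filter_eq_empty_iff]
    intro I _
    rintro ⟨hIr, hJI, hIK⟩
    apply hcond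
    have hsub : J ∩ K ⊆ I ∩ K := inter_subset_inter hJI Subset.rfl
    have hst : s ≤ t := hIK ▸ card_le_card hsub
    have hJIK : J ∩ (I ∩ K) = J ∩ K := by
      ext x; simp only [mem_inter]
      exact ⟨fun h => ⟨h.1, h.2.2⟩, fun h => ⟨h.1, hJI h.1, h.2⟩⟩
    have h2 : (J ∪ (I ∩ K)).card + s = 2 + t := by
      have := card_union_add_card_inter J (I ∩ K)
      rw [hJIK, hJ, hIK] at this
      omega
    have hle : (J ∪ (I ∩ K)).card ≤ r := by
      rw [← hIr]
      exact card_le_card (union_subset hJI inter_subset_left)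
    omega

lemma key_inj (n r : ℕ) (hr : 2 ≤ r) (hrn : r ≤ n - 2)
    (z : {J : Finset (Fin n) // J.card = 2} → ℝ)
    (hz : ∀ I : {I : Finset (Fin n) // I.card = r},
      (∑ J : {J : Finset (Fin n) // J.card = 2}, if J.1 ⊆ I.1 then z J else 0) = 0) :
    z = 0 := by
  have hn : 4 ≤ n := by omega
  funext K
  set A : ℕ → ℝ := fun s =>
    ∑ J : {J : Finset (Fin n) // J.card = 2},
      if (J.1 ∩ K.1).card = s then z J else 0 with hA
  have Et : ∀ t : ℕ, (nu n r t 0 : ℝ) * A 0 + (nu n r t 1 : ℝ) * A 1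
      + (nu n r t 2 : ℝ) * A 2 = 0 := by
    intro t
    set Ft := univ.filter (fun I : Finset (Fin n) => I.card = r ∧ (I ∩ K.1).card = t) with hFt
    have h1 : ∑ I ∈ Ft, ∑ J : {J : Finset (Fin n) // J.card = 2},
        (if J.1 ⊆ I then z J else 0) = 0 := by
      apply Finset.sum_eq_zero
      intro I hI
      exact hz ⟨I, (Finset.mem_filter.mp hI).2.1⟩
    rw [Finset.sum_comm] at h1
    have h2 : ∀ J : {J : Finset (Fin n) // J.card = 2},
        (∑ I ∈ Ft, if J.1 ⊆ I then z J else 0)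
          = (nu n r t (J.1 ∩ K.1).card : ℝ) * z J := by
      intro J
      rw [← Finset.sum_filter, Finset.sum_const, nsmul_eq_mul]
      congr 2
      rw [← count_eq r t hn K.1 J.1 K.2 J.2]
      congr 1
      rw [hFt, Finset.filter_filter]
      apply Finset.filter_congr
      intro I _
      tauto
    rw [Finset.sum_congr rfl (fun J _ => h2 J)] at h1
    have h3 : ∀ J : {J : Finset (Fin n) // J.card = 2},
        (nu n r t (J.1 ∩ K.1).card : ℝ) * z J
          = (if (J.1 ∩ K.1).card = 0 then (nu n r t 0 : ℝ) * z J else 0)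
          + (if (J.1 ∩ K.1).card = 1 then (nu n r t 1 : ℝ) * z J else 0)
          + (if (J.1 ∩ K.1).card = 2 then (nu n r t 2 : ℝ) * z J else 0) := by
      intro J
      have hle : (J.1 ∩ K.1).card ≤ 2 :=
        le_trans (card_le_card inter_subset_left) (le_of_eq J.2)
      interval_cases h : (J.1 ∩ K.1).card <;> simp
    rw [Finset.sum_congr rfl (fun J _ => h3 J), Finset.sum_add_distrib,
      Finset.sum_add_distrib] at h1
    have h4 : ∀ i : ℕ, (∑ J : {J : Finset (Fin n) // J.card = 2},
        if (J.1 ∩ K.1).card = i then (nu n r t i : ℝ) * z J else 0)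
          = (nu n r t i : ℝ) * A i := by
      intro i
      rw [hA, Finset.mul_sum]
      apply Finset.sum_congr rfl
      intro J _
      split_ifs <;> simp
    rw [h4 0, h4 1, h4 2] at h1
    exact h1
  have hnu00 : nu n r 0 0 = (n - 4).choose (r - 2) := by
    rw [nu, if_pos (by omega)]; simp
  have hnu01 : nu n r 0 1 = 0 := by rw [nu, if_neg (by omega)]
  have hnu02 : nu n r 0 2 = 0 := by rw [nu, if_neg (by omega)]
  have hnu11 : nu n r 1 1 = (n - 3).choose (r - 2) := by
    rw [nu, if_pos (by omega)]
    have h : n - 4 + 1 = n - 3 := by omega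
    simp [h]
  have hnu12 : nu n r 1 2 = 0 := by rw [nu, if_neg (by omega)]
  have hnu22 : nu n r 2 2 = (n - 2).choose (r - 2) := by
    rw [nu, if_pos (by omega)]
    have h : n - 4 + 2 = n - 2 := by omega
    simp [h]
  have hA0 : A 0 = 0 := by
    have e := Et 0
    rw [hnu00, hnu01, hnu02] at e
    have hpos : 0 < (n - 4).choose (r - 2) := Nat.choose_pos (by omega)
    have : ((n - 4).choose (r - 2) : ℝ) ≠ 0 := by positivity
    simp only [Nat.cast_zero, zero_mul, add_zero] at e
    exact (mul_eq_zero.mp e).resolve_left this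
  have hA1 : A 1 = 0 := by
    have e := Et 1
    rw [hnu11, hnu12, hA0] at e
    have hpos : 0 < (n - 3).choose (r - 2) := Nat.choose_pos (by omega)
    have hne : ((n - 3).choose (r - 2) : ℝ) ≠ 0 := by positivity
    simp only [Nat.cast_zero, zero_mul, add_zero, mul_zero, zero_add] at e
    exact (mul_eq_zero.mp e).resolve_left hne
  have hA2 : A 2 = 0 := by
    have e := Et 2
    rw [hnu22, hA0, hA1] at e
    have hpos : 0 < (n - 2).choose (r - 2) := Nat.choose_pos (by omega)
    have hne : ((n - 2).choose (r - 2) : ℝ) ≠ 0 := by positivity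
    simp only [mul_zero, zero_add, add_zero] at e
    exact (mul_eq_zero.mp e).resolve_left hne
  have hAK : A 2 = z K := by
    show (∑ J : {J : Finset (Fin n) // J.card = 2},
      if (J.1 ∩ K.1).card = 2 then z J else 0) = z K
    have hcond : ∀ J : {J : Finset (Fin n) // J.card = 2},
        ((J.1 ∩ K.1).card = 2) ↔ J = K := by
      intro J
      constructor
      · intro h
        have h1 : J.1 ∩ K.1 = J.1 :=
          Finset.eq_of_subset_of_card_le inter_subset_left (by rw [J.2, h])
        have h2 : J.1 ⊆ K.1 := by rw [← h1]; exact inter_subset_right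
        have h3 : J.1 = K.1 :=
          Finset.eq_of_subset_of_card_le h2 (by rw [J.2, K.2])
        exact Subtype.ext h3
      · rintro rfl
        rw [inter_self]; exact J.2
    rw [Finset.sum_congr rfl (fun J _ => by rw [if_congr (hcond J) rfl rfl])]
    rw [Finset.sum_ite_eq' univ K z]
    simp
  rw [hAK] at hA2
  exact hA2

/-- For `2 ≤ r ≤ n-2`, the linear map `ℝ^(C(n,2)) → ℝ^(C(n,r))` whose `I`-coordinate
is `∑_{{i,j} ⊆ I} x_{ij}` is injective; when `r = 2` or `r = n-2` it is bijective. -/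
theorem stmt_4 (n r : ℕ) (hr : 2 ≤ r) (hrn : r ≤ n - 2)
    (T : ({J : Finset (Fin n) // J.card = 2} → ℝ) →
         ({I : Finset (Fin n) // I.card = r} → ℝ))
    (hT : ∀ x I, T x I = ∑ J : {J : Finset (Fin n) // J.card = 2},
      if J.1 ⊆ I.1 then x J else 0) :
    Function.Injective T ∧ ((r = 2 ∨ r = n - 2) → Function.Bijective T) := by
  have inj : Function.Injective T := by
    intro x y hxy
    have hz : ∀ I : {I : Finset (Fin n) // I.card = r},
        (∑ J : {J : Finset (Fin n) // J.card = 2},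
          if J.1 ⊆ I.1 then (x - y) J else 0) = 0 := by
      intro I
      have h1 : T x I = T y I := congrFun hxy I
      rw [hT x I, hT y I] at h1
      have h2 : (∑ J : {J : Finset (Fin n) // J.card = 2},
          if J.1 ⊆ I.1 then (x - y) J else 0)
          = (∑ J : {J : Finset (Fin n) // J.card = 2}, if J.1 ⊆ I.1 then x J else 0)
          - (∑ J : {J : Finset (Fin n) // J.card = 2}, if J.1 ⊆ I.1 then y J else 0) := by
        rw [← Finset.sum_sub_distrib]
        apply Finset.sum_congr rfl
        intro J _
        split_ifs <;> simp
      rw [h2, h1, sub_self]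
    have := key_inj n r hr hrn (x - y) hz
    exact sub_eq_zero.mp this
  refine ⟨inj, fun h => ?_⟩
  have hn : 4 ≤ n := by omega
  have hc : Fintype.card {J : Finset (Fin n) // J.card = 2}
      = Fintype.card {I : Finset (Fin n) // I.card = r} := by
    rw [Fintype.card_finset_len, Fintype.card_finset_len, Fintype.card_fin]
    rcases h with h | h
    · rw [h]
    · rw [h]
      exact (Nat.choose_symm (by omega)).symm
  let L : ({J : Finset (Fin n) // J.card = 2} → ℝ) →ₗ[ℝ]
      ({I : Finset (Fin n) // I.card = r} → ℝ) :=
    { toFun := fun x I => ∑ J : {J : Finset (Fin n) // J.card = 2},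
        if J.1 ⊆ I.1 then x J else 0
      map_add' := by
        intro x y
        funext I
        simp only [Pi.add_apply, ← Finset.sum_add_distrib]
        apply Finset.sum_congr rfl
        intro J _
        split_ifs <;> simp
      map_smul' := by
        intro c x
        funext I
        simp only [Pi.smul_apply, smul_eq_mul, RingHom.id_apply, Finset.mul_sum]
        apply Finset.sum_congr rfl
        intro J _
        split_ifs <;> simp }
  have hTL : T = L := by
    funext x I
    rw [hT x I]
    rfl
  have hfr : Module.finrank ℝ ({J : Finset (Fin n) // J.card = 2} → ℝ)
      = Module.finrank ℝ ({I : Finset (Fin n) // I.card = r} → ℝ) := by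
    rw [Module.finrank_pi, Module.finrank_pi, hc]
  have hsurj : Function.Surjective L :=
    (LinearMap.injective_iff_surjective_of_finrank_eq_finrank hfr).mp (hTL ▸ inj)
  exact ⟨inj, hTL ▸ hsurj⟩
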